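/- Let n ≥ 2 and let d₁,…,d_m be nonzero integers. Suppose there exists a vector (y₁,…,y_m,0) ∈ ℤ^{m+1} that is n-effective (not p-trivial for any prime p | n) and satisfies d_i y_i ≡ 0 (mod n) for all i. Then n ≤ |d₁ ⋯ d_m|. -/

import Mathlib

/-- A vector is `p`-trivial if all its entries are congruent mod `p`. -/
def pTrivial (p : ℕ) {k : ℕ} (x : Fin k → ℤ) : Prop :=
  ∀ i j, x i ≡ x j [ZMOD (p : ℤ)]

/-- A vector is `n`-effective if it is not `p`-trivial for any prime `p` dividing `n`. -/
def nEffective (n : ℕ) {k : ℕ} (x : Fin k → ℤ) : Prop :=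
  ∀ p : ℕ, p.Prime → p ∣ n → ¬ pTrivial p x

theorem stmt_3 (n : ℕ) (hn : 2 ≤ n) (m : ℕ) (d : Fin m → ℤ)
    (hd : ∀ i, d i ≠ 0)
    (y : Fin (m + 1) → ℤ)
    (hylast : y (Fin.last m) = 0)
    (heff : nEffective n y)
    (hsol : ∀ i : Fin m, d i * y i.castSucc ≡ 0 [ZMOD (n : ℤ)]) :
    (n : ℤ) ≤ |∏ i, d i| := by
  have hP0 : (∏ i, d i) ≠ 0 := Finset.prod_ne_zero_iff.mpr fun i _ => hd i
  have hdvd : n ∣ (∏ i, d i).natAbs := by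
    rw [Nat.dvd_iff_prime_pow_dvd_dvd]
    intro p k hp hpk
    -- find i with p ∤ y i.castSucc
    rcases Nat.eq_zero_or_pos k with rfl | hk
    · simp
    have hpn : p ∣ n := (dvd_pow_self p hk.ne').trans hpk
    obtain ⟨i, hi⟩ : ∃ i : Fin (m+1), ¬ ((p : ℤ) ∣ y i) := by
      by_contra h
      push_neg at h
      exact heff p hp hpn fun i j => by
        obtain ⟨a, ha⟩ := h i; obtain ⟨b, hb⟩ := h j
        simp [Int.ModEq, Int.emod_emod_of_dvd, ha, hb, Int.mul_emod_right]
    have hine : i ≠ Fin.last m := by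
      rintro rfl; exact hi (hylast ▸ dvd_zero _)
    obtain ⟨j, rfl⟩ := Fin.exists_castSucc_eq.2 hine
    -- p^k ∣ d j
    have hnd : (n : ℤ) ∣ d j * y j.castSucc := by
      have := (hsol j).symm.dvd
      simpa using this
    have hpkd : (p : ℤ) ^ k ∣ d j * y j.castSucc := by
      refine dvd_trans ?_ hnd
      exact_mod_cast Int.natCast_dvd_natCast.mpr hpk
    have hcop : IsCoprime ((p : ℤ) ^ k) (y j.castSucc) := by
      apply IsCoprime.pow_left
      exact (Nat.prime_iff_prime_int.mp hp).coprime_iff_not_dvd.mpr hi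
    have hdj : (p : ℤ) ^ k ∣ d j := hcop.dvd_of_dvd_mul_right hpkd
    have : (p : ℤ) ^ k ∣ ∏ i, d i := hdj.trans (Finset.dvd_prod_of_mem d (Finset.mem_univ j))
    have h2 := Int.natAbs_dvd_natAbs.mpr this
    rwa [Int.natAbs_pow, Int.natAbs_natCast] at h2
  have : (n : ℤ) ∣ |∏ i, d i| := by
    rw [Int.abs_eq_natAbs]
    exact_mod_cast hdvd
  exact Int.le_of_dvd (abs_pos.mpr hP0) this
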